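/- In S = Sz(q) with q = 2^(2m+1) ≥ 8, if 2 is an isolated vertex of the prime graph (no element of order 2p for odd prime p), then for every odd element order i of S, q^2 divides m_i(S), the number of elements of order i. -/
import Mathlib


/-- Let `S` be a group of order `q^2(q^2+1)(q-1)` with `q = 2^(2m+1) ≥ 8` (such as
`Sz(q)`). If `2` is an isolated vertex of the prime graph of `S` (no element of order
`2p` for any odd prime `p`), then for every odd element order `i > 1` of `S`, `q^2`
divides the number of elements of `S` of order `i`. -/
theorem stmt_14 (m : ℕ) (hm : 1 ≤ m) (S : Type*) [Group S] [Fintype S]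
    (hcard : Fintype.card S =
      (2 ^ (2 * m + 1)) ^ 2 * ((2 ^ (2 * m + 1)) ^ 2 + 1) * (2 ^ (2 * m + 1) - 1))
    (hiso : ∀ p : ℕ, p.Prime → Odd p → ¬ ∃ x : S, orderOf x = 2 * p) :
    ∀ i : ℕ, Odd i → 1 < i → (∃ x : S, orderOf x = i) →
      (2 ^ (2 * m + 1)) ^ 2 ∣ Nat.card {x : S | orderOf x = i} := by
  classical
  intro i hi hi1 _hex
  set q : ℕ := 2 ^ (2 * m + 1) with hq
  have hq2 : 2 ≤ q := by
    calc 2 = 2 ^ 1 := (pow_one 2).symm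
    _ ≤ 2 ^ (2 * m + 1) := Nat.pow_le_pow_right (by norm_num) (by omega)
  have hqdvd : 2 ∣ q := dvd_pow_self 2 (by omega)
  have hodd1 : ¬ (2 ∣ (q ^ 2 + 1)) := by
    have : 2 ∣ q ^ 2 := dvd_pow hqdvd two_ne_zero
    omega
  have hodd2 : ¬ (2 ∣ (q - 1)) := by omega
  -- factorization of the group order at 2
  have hfact : (Nat.card S).factorization 2 = (2 * m + 1) * 2 := by
    rw [Nat.card_eq_fintype_card, hcard, Nat.factorization_mul (by positivity) (by omega),
      Nat.factorization_mul (by positivity) (by omega), Finsupp.add_apply, Finsupp.add_apply,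
      Nat.factorization_eq_zero_of_not_dvd hodd1, Nat.factorization_eq_zero_of_not_dvd hodd2,
      hq, ← pow_mul, Nat.Prime.factorization_pow Nat.prime_two, Finsupp.single_eq_same]
    ring
  haveI : Fact (Nat.Prime 2) := ⟨Nat.prime_two⟩
  obtain ⟨P⟩ : Nonempty (Sylow 2 S) := inferInstance
  have hPcard : Nat.card P = q ^ 2 := by
    rw [Sylow.card_eq_multiplicity, hfact, hq, ← pow_mul]
  set X : Set S := {x : S | orderOf x = i} with hX
  -- conjugation action of the Sylow 2-subgroup on X
  letI act : MulAction P X :=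
    { smul := fun g x => ⟨(g : S) * x * (g : S)⁻¹, by
        have hsc : SemiconjBy (g : S) (x : S) ((g : S) * x * (g : S)⁻¹) := by
          unfold SemiconjBy; group
        exact (hsc.orderOf_eq _).symm.trans x.2⟩
      one_smul := fun x => by
        apply Subtype.ext; show (1 : S) * x * (1 : S)⁻¹ = x; group
      mul_smul := fun g h x => by
        apply Subtype.ext
        show ((g * h : P) : S) * x * ((g * h : P) : S)⁻¹
          = (g : S) * ((h : S) * x * (h : S)⁻¹) * (g : S)⁻¹
        push_cast
        group }
  -- the stabilizer of any point is trivial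
  have hstab : ∀ x : X, MulAction.stabilizer P x = ⊥ := by
    intro x
    ext g
    simp only [Subgroup.mem_bot, MulAction.mem_stabilizer_iff]
    constructor
    · intro hgx
      by_contra hg
      have hcomm : Commute (g : S) (x : S) := by
        have h1 : (g : S) * x * (g : S)⁻¹ = (x : S) := congrArg Subtype.val hgx
        have := mul_inv_eq_iff_eq_mul.mp h1
        exact this
      -- order of g is a nontrivial power of 2
      have hdvd : orderOf g ∣ 2 ^ ((2 * m + 1) * 2) := by
        have := orderOf_dvd_natCard g
        rwa [hPcard, hq, ← pow_mul] at this
      obtain ⟨j, hj, hoj⟩ := (Nat.dvd_prime_pow Nat.prime_two).mp hdvd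
      have hj1 : 1 ≤ j := by
        by_contra hcon
        apply hg
        have h0 : j = 0 := by omega
        rw [h0, pow_zero] at hoj
        exact orderOf_eq_one_iff.mp hoj
      -- t has order 2
      set t : P := g ^ (2 ^ (j - 1)) with htdef
      have ht2 : orderOf t = 2 := by
        rw [htdef, orderOf_pow, hoj, Nat.gcd_eq_right (pow_dvd_pow 2 (by omega)),
          Nat.pow_div (by omega) (by norm_num)]
        have hj2 : j - (j - 1) = 1 := by omega
        rw [hj2, pow_one]
      have htS : orderOf ((t : P) : S) = 2 := by
        exact (orderOf_injective (P : Subgroup S).subtype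
          (Subgroup.subtype_injective _) t).trans ht2
      -- z has odd prime order p
      set p : ℕ := i.minFac with hp
      have hpp : p.Prime := Nat.minFac_prime (by omega)
      have hpdvd : p ∣ i := Nat.minFac_dvd i
      have hpodd : Odd p := by
        refine hpp.odd_of_ne_two fun h2 => ?_
        rw [Nat.odd_iff] at hi
        have h2i : 2 ∣ i := h2 ▸ hpdvd
        omega
      set z : S := (x : S) ^ (i / p) with hz
      have hzord : orderOf z = p := by
        have hxi : orderOf (x : S) = i := x.2
        rw [hz, orderOf_pow, hxi, Nat.gcd_eq_right (Nat.div_dvd_of_dvd hpdvd),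
          Nat.div_div_self hpdvd (by omega)]
      have hctz : Commute ((t : P) : S) z := by
        rw [hz, htdef]
        push_cast
        exact (hcomm.pow_left _).pow_right _
      have : orderOf (((t : P) : S) * z) = 2 * p := by
        rw [hctz.orderOf_mul_eq_mul_orderOf_of_coprime, htS, hzord]
        rw [htS, hzord]
        exact Nat.coprime_two_left.mpr hpodd
      exact hiso p hpp hpodd ⟨_, this⟩
    · intro h; rw [h]; exact one_smul _ x
  -- count: X is partitioned into orbits, each of size q^2
  haveI : Fintype X := by
    rw [hX]; infer_instance
  have key : Nat.card X = Fintype.card (Σ ω : MulAction.orbitRel.Quotient P X,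
      MulAction.orbit P (ω.out : X)) := by
    rw [Nat.card_eq_fintype_card]
    exact Fintype.card_congr (MulAction.selfEquivSigmaOrbits P X)
  rw [key, Fintype.card_sigma]
  apply Finset.dvd_sum
  intro ω _
  have : Fintype.card (MulAction.orbit P (ω.out : X)) = q ^ 2 := by
    rw [← Nat.card_eq_fintype_card,
      Nat.card_congr (MulAction.orbitEquivQuotientStabilizer P (ω.out : X)),
      hstab, ← hPcard]
    exact (Nat.card_congr (QuotientGroup.quotientBot (G := (P : Subgroup S))).toEquiv)
  rw [this]
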